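/- Let g_1,…,g_M be vectors in the Euclidean space ℝ^n (M ≥ 1). Then sup_{d ∈ ℝ^n} min_{k ∈ {1,…,M}} ( ⟨d, g_k⟩ − (1/2)‖d‖² ) = min_{w ∈ Δ_M} (1/2)‖Σ_{k=1}^M w_k g_k‖², where the minimum over the (compact) simplex is attained; moreover, for any minimizer w* of ‖Σ_k w_k g_k‖ over Δ_M, the supremum on the left is attained at d* = Σ_{k=1}^M w*_k g_k. (This is the equivalence between the MGDA max–min descent problem and the minimum-norm convex-combination problem over the gradients.) -/

import Mathlib

open scoped BigOperators RealInnerProductSpace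

-- weighted lemma
lemma aux_inf'_le_weighted {M : ℕ} (hM : 1 ≤ M) (f : Fin M → ℝ) (w : Fin M → ℝ)
    (hw : w ∈ stdSimplex ℝ (Fin M)) :
    Finset.univ.inf' (Finset.univ_nonempty_iff.mpr ⟨⟨0, hM⟩⟩) f ≤ ∑ k, w k * f k := by
  have h1 : Finset.univ.inf' (Finset.univ_nonempty_iff.mpr ⟨⟨0, hM⟩⟩) f
      = ∑ k, w k * Finset.univ.inf' (Finset.univ_nonempty_iff.mpr ⟨⟨0, hM⟩⟩) f := by
    rw [← Finset.sum_mul, hw.2, one_mul]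
  rw [h1]
  refine Finset.sum_le_sum fun k _ => ?_
  exact mul_le_mul_of_nonneg_left (Finset.inf'_le _ (Finset.mem_univ k)) (hw.1 k)

-- variational inequality
lemma aux_var {n M : ℕ} (g : Fin M → EuclideanSpace ℝ (Fin n)) (w : Fin M → ℝ)
    (hw : w ∈ stdSimplex ℝ (Fin M))
    (hmin : ∀ w' ∈ stdSimplex ℝ (Fin M), ‖∑ k, w k • g k‖ ≤ ‖∑ k, w' k • g k‖)
    (k : Fin M) : ‖∑ j, w j • g j‖ ^ 2 ≤ ⟪∑ j, w j • g j, g k⟫ := by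
  set u := ∑ j, w j • g j with hu
  have key : ∀ t : ℝ, 0 < t → t ≤ 1 →
      0 ≤ 2 * t * ⟪u, g k - u⟫ + t ^ 2 * ‖g k - u‖ ^ 2 := by
    intro t ht0 ht1
    set wt : Fin M → ℝ := fun j => (1 - t) * w j + t * (if j = k then 1 else 0) with hwt
    have hwtmem : wt ∈ stdSimplex ℝ (Fin M) := by
      constructor
      · intro j
        have := hw.1 j
        dsimp [wt]
        split <;> nlinarith
      · simp only [wt, Finset.sum_add_distrib, ← Finset.mul_sum, hw.2,
          Finset.sum_ite_eq', Finset.mem_univ, if_true]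
        ring
    have hsum : ∑ j, wt j • g j = u + t • (g k - u) := by
      have h2 : ∑ j, (if j = k then (1:ℝ) else 0) • g j = g k := by
        simp [ite_smul]
      simp only [wt, add_smul, mul_smul, Finset.sum_add_distrib,
        ← Finset.smul_sum, h2, ← hu]
      module
    have h3 := hmin wt hwtmem
    rw [hsum] at h3
    have h4 : ‖u‖ ^ 2 ≤ ‖u + t • (g k - u)‖ ^ 2 := by
      have := norm_nonneg u
      nlinarith
    rw [norm_add_sq_real, real_inner_smul_right, norm_smul, Real.norm_eq_abs,
      abs_of_pos ht0, mul_pow] at h4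
    nlinarith
  have hfinal : 0 ≤ ⟪u, g k - u⟫ := by
    by_contra hc
    push_neg at hc
    set c := ⟪u, g k - u⟫
    set D := ‖g k - u‖ ^ 2 with hD
    have hD0 : 0 ≤ D := by positivity
    rcases eq_or_lt_of_le hD0 with h | h
    · have := key 1 one_pos le_rfl
      nlinarith
    · have ht0 : 0 < min 1 (-c / D) := lt_min one_pos (div_pos (by linarith) h)
      have := key (min 1 (-c / D)) ht0 (min_le_left _ _)
      have h5 : min 1 (-c / D) ≤ -c / D := min_le_right _ _
      have h6 : min 1 (-c / D) * D ≤ -c := (le_div_iff₀ h).mp h5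
      nlinarith
  rw [inner_sub_right, real_inner_self_eq_norm_sq] at hfinal
  linarith

lemma aux_value {n M : ℕ} (hM : 1 ≤ M) (g : Fin M → EuclideanSpace ℝ (Fin n)) (w : Fin M → ℝ)
    (hw : w ∈ stdSimplex ℝ (Fin M))
    (hmin : ∀ w' ∈ stdSimplex ℝ (Fin M), ‖∑ k, w k • g k‖ ≤ ‖∑ k, w' k • g k‖) :
    Finset.univ.inf' (Finset.univ_nonempty_iff.mpr ⟨⟨0, hM⟩⟩)
      (fun k => ⟪∑ j, w j • g j, g k⟫ - (1 / 2) * ‖∑ j, w j • g j‖ ^ 2)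
    = (1 / 2) * ‖∑ j, w j • g j‖ ^ 2 := by
  set u := ∑ j, w j • g j with hu
  have hsum : ∑ k, w k * ⟪u, g k⟫ = ‖u‖ ^ 2 := by
    rw [← real_inner_self_eq_norm_sq]
    nth_rewrite 2 [hu]
    rw [inner_sum]
    simp only [real_inner_smul_right]
    rfl
  apply le_antisymm
  · have h1 := aux_inf'_le_weighted hM (fun k => ⟪u, g k⟫ - (1 / 2) * ‖u‖ ^ 2) w hw
    have h2 : ∑ k, w k * (⟪u, g k⟫ - (1 / 2) * ‖u‖ ^ 2) = (1 / 2) * ‖u‖ ^ 2 := by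
      simp only [mul_sub, Finset.sum_sub_distrib, ← Finset.sum_mul, hw.2, hsum]
      ring
    calc _ ≤ _ := h1
      _ = _ := h2
  · apply Finset.le_inf'
    intro k _
    have := aux_var g w hw hmin k
    linarith

/-- **MGDA max–min equivalence.** For vectors `g 1, …, g M` in `ℝ^n` (`M ≥ 1`),
`sup_{d} min_k (⟨d, g k⟩ − ½‖d‖²) = min_{w ∈ Δ_M} ½‖∑ k, w k • g k‖²`, the minimum over the
simplex being attained; moreover, for any minimizer `w*` of `‖∑ k, w k • g k‖` over `Δ_M`,
the supremum on the left is attained at `d* = ∑ k, w* k • g k`. -/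
theorem stmt5 {n M : ℕ} (hM : 1 ≤ M) (g : Fin M → EuclideanSpace ℝ (Fin n)) :
    ∃ m : ℝ,
      IsLeast
        ((fun w : Fin M → ℝ => (1 / 2) * ‖∑ k, w k • g k‖ ^ 2) '' stdSimplex ℝ (Fin M)) m ∧
      IsGreatest
        (Set.range fun d : EuclideanSpace ℝ (Fin n) =>
          Finset.univ.inf' (Finset.univ_nonempty_iff.mpr ⟨⟨0, hM⟩⟩)
            (fun k => ⟪d, g k⟫ - (1 / 2) * ‖d‖ ^ 2)) m ∧
      ∀ w ∈ stdSimplex ℝ (Fin M),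
        (∀ w' ∈ stdSimplex ℝ (Fin M), ‖∑ k, w k • g k‖ ≤ ‖∑ k, w' k • g k‖) →
        Finset.univ.inf' (Finset.univ_nonempty_iff.mpr ⟨⟨0, hM⟩⟩)
          (fun k => ⟪∑ j, w j • g j, g k⟫ - (1 / 2) * ‖∑ j, w j • g j‖ ^ 2) = m := by
  have hne : (stdSimplex ℝ (Fin M)).Nonempty := by
    refine ⟨fun j => if j = ⟨0, hM⟩ then 1 else 0, fun j => ?_, by simp⟩
    dsimp; split <;> norm_num
  have hcont : Continuous fun w : Fin M → ℝ => ‖∑ k, w k • g k‖ :=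
    (continuous_finset_sum _ fun k _ => (continuous_apply k).smul continuous_const).norm
  obtain ⟨w0, hw0, hmin0⟩ := (isCompact_stdSimplex ℝ (Fin M)).exists_isMinOn hne hcont.continuousOn
  have hmin0' : ∀ w' ∈ stdSimplex ℝ (Fin M), ‖∑ k, w0 k • g k‖ ≤ ‖∑ k, w' k • g k‖ :=
    fun w' hw' => hmin0 hw'
  set u0 := ∑ k, w0 k • g k with hu0
  refine ⟨(1 / 2) * ‖u0‖ ^ 2, ⟨⟨w0, hw0, rfl⟩, ?_⟩, ⟨⟨u0, aux_value hM g w0 hw0 hmin0'⟩, ?_⟩, ?_⟩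
  · rintro x ⟨w', hw', rfl⟩
    have h1 := hmin0' w' hw'
    have h2 := norm_nonneg u0
    nlinarith
  · rintro x ⟨d, rfl⟩
    have h1 := aux_inf'_le_weighted hM (fun k => ⟪d, g k⟫ - (1 / 2) * ‖d‖ ^ 2) w0 hw0
    have hsum : ∑ k, w0 k * ⟪d, g k⟫ = ⟪d, u0⟫ := by
      conv_rhs => rw [hu0]
      rw [inner_sum]
      simp only [real_inner_smul_right]
    have h2 : ∑ k, w0 k * (⟪d, g k⟫ - (1 / 2) * ‖d‖ ^ 2) = ⟪d, u0⟫ - (1 / 2) * ‖d‖ ^ 2 := by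
      simp only [mul_sub, Finset.sum_sub_distrib, ← Finset.sum_mul, hw0.2, hsum]
      ring
    have h3 : ⟪d, u0⟫ ≤ ‖d‖ * ‖u0‖ := real_inner_le_norm d u0
    have h4 := sq_nonneg (‖d‖ - ‖u0‖)
    calc _ ≤ _ := h1
      _ = _ := h2
      _ ≤ (1 / 2) * ‖u0‖ ^ 2 := by nlinarith
  · intro w hw hminw
    rw [aux_value hM g w hw hminw]
    have : ‖∑ k, w k • g k‖ = ‖u0‖ := le_antisymm (hminw w0 hw0) (hmin0' w hw)
    rw [this]
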